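/- Assume strictly positive prices and that the per-good net utilities v_k({l}, p) = w_l − p_l are pairwise distinct. Then the set A_k consisting of all goods whose per-good net utility is strictly positive, truncated to the q_k goods with the largest per-good net utilities, is a demand set of consumer k, i.e., it maximizes the net utility v_k(B,p) = U_k(B) − ∑_{l∈B} p_l over all B ⊆ L. -/

import Mathlib

open Finset

variable {L : Type*} [Fintype L] [DecidableEq L]

/-- Hypotheses of the greedy demand construction: prices are strictly positive,
weights nonnegative, per-good net utilities `w l - p l` pairwise distinct, and
`A` consists of the at most `q` goods with the largest strictly positive
per-good net utilities. -/
structure GreedySetting (w p : L → ℝ) (q : ℕ) (A : Finset L) : Prop where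
  hp : ∀ l, 0 < p l
  hw : ∀ l, 0 ≤ w l
  distinct : ∀ l l', l ≠ l' → w l - p l ≠ w l' - p l'
  pos : ∀ l ∈ A, 0 < w l - p l
  card : A.card = min q (Finset.univ.filter (fun l => 0 < w l - p l)).card
  best : ∀ l ∈ A, ∀ l' ∉ A, 0 < w l' - p l' → w l' - p l' < w l - p l

/-- The greedy set `A` is a demand set: it maximizes the net utility
`v(B,p) = U(B) - ∑_{l∈B} p l`, where `U` is the `q`-satiation of the
additively separable valuation with weights `w`. -/
theorem greedy_is_demand (w p : L → ℝ) (q : ℕ) (A : Finset L)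
    (hG : GreedySetting w p q A) (U : Finset L → ℝ)
    (hU : ∀ A' : Finset L,
      IsGreatest {x | ∃ B ⊆ A', B.card ≤ q ∧ x = ∑ l ∈ B, w l} (U A')) :
    ∀ B : Finset L, U B - ∑ l ∈ B, p l ≤ U A - ∑ l ∈ A, p l := by
  intro B
  have hAq : A.card ≤ q := hG.card ▸ min_le_left _ _
  -- U A equals the full sum over A
  have hUA : U A = ∑ l ∈ A, w l := by
    have h2 : ∑ l ∈ A, w l ≤ U A := (hU A).2 ⟨A, Finset.Subset.refl A, hAq, rfl⟩
    obtain ⟨Bb, hBb, _, hx⟩ := (hU A).1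
    have h1 : U A ≤ ∑ l ∈ A, w l := by
      rw [hx]
      exact Finset.sum_le_sum_of_subset_of_nonneg hBb (fun i _ _ => hG.hw i)
    linarith
  obtain ⟨C, hCB, hCq, hUB⟩ := (hU B).1
  classical
  set C' : Finset L := C.filter (fun l => 0 < w l - p l) with hC'def
  have hC'sub : C' ⊆ C := Finset.filter_subset _ _
  have hC'q : C'.card ≤ q := le_trans (Finset.card_le_card hC'sub) hCq
  have hApos : A ⊆ Finset.univ.filter (fun l => 0 < w l - p l) :=
    fun l hl => Finset.mem_filter.2 ⟨Finset.mem_univ l, hG.pos l hl⟩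
  -- key: ∑ over C' of net utilities ≤ ∑ over A
  have key : ∑ l ∈ C', (w l - p l) ≤ ∑ l ∈ A, (w l - p l) := by
    rcases le_or_gt (Finset.univ.filter (fun l => 0 < w l - p l)).card q with h | h
    · -- A is the whole positive set, and C' ⊆ A
      have hAcard : A.card = (Finset.univ.filter (fun l => 0 < w l - p l)).card := by
        rw [hG.card, min_eq_right h]
      have hAeq : A = Finset.univ.filter (fun l => 0 < w l - p l) :=
        Finset.eq_of_subset_of_card_le hApos (le_of_eq hAcard.symm)
      have hC'A : C' ⊆ A := by
        intro x hx
        rw [hAeq]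
        exact Finset.mem_filter.2 ⟨Finset.mem_univ x, (Finset.mem_filter.1 hx).2⟩
      exact Finset.sum_le_sum_of_subset_of_nonneg hC'A
        (fun i hi _ => le_of_lt (hG.pos i hi))
    · -- A has exactly q elements
      have hAcard : A.card = q := by rw [hG.card, min_eq_left (le_of_lt h)]
      have hcard_le : (C' \ A).card ≤ (A \ C').card := by
        have h1 := Finset.card_sdiff_add_card_inter C' A
        have h2 := Finset.card_sdiff_add_card_inter A C'
        have h3 : (C' ∩ A).card = (A ∩ C').card := by rw [Finset.inter_comm]
        omega
      have hdiff : ∑ l ∈ C' \ A, (w l - p l) ≤ ∑ l ∈ A \ C', (w l - p l) := by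
        rcases Finset.eq_empty_or_nonempty (C' \ A) with he | hne
        · rw [he, Finset.sum_empty]
          exact Finset.sum_nonneg fun i hi =>
            le_of_lt (hG.pos i (Finset.mem_sdiff.1 hi).1)
        · have hne' : (A \ C').Nonempty := by
            rw [← Finset.card_pos] at hne ⊢
            omega
          obtain ⟨a, ha, hfa⟩ := Finset.mem_image.1
            (Finset.min'_mem ((A \ C').image (fun l => w l - p l)) (hne'.image _))
          set m : ℝ := ((A \ C').image (fun l => w l - p l)).min' (hne'.image _) with hm
          have haA : a ∈ A := (Finset.mem_sdiff.1 ha).1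
          have hmpos : 0 < m := by rw [← hfa]; exact hG.pos a haA
          have hub : ∀ x ∈ C' \ A, w x - p x ≤ m := by
            intro x hx
            obtain ⟨hxC', hxA⟩ := Finset.mem_sdiff.1 hx
            have hxpos : 0 < w x - p x := (Finset.mem_filter.1 hxC').2
            have := hG.best a haA x hxA hxpos
            linarith [hfa]
          have hlb : ∀ x ∈ A \ C', m ≤ w x - p x := by
            intro x hx
            exact Finset.min'_le _ _ (Finset.mem_image_of_mem _ hx)
          calc ∑ l ∈ C' \ A, (w l - p l) ≤ (C' \ A).card • m :=
                Finset.sum_le_card_nsmul _ _ _ hub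
            _ ≤ (A \ C').card • m := by
                rw [nsmul_eq_mul, nsmul_eq_mul]
                exact mul_le_mul_of_nonneg_right (by exact_mod_cast hcard_le)
                  (le_of_lt hmpos)
            _ ≤ ∑ l ∈ A \ C', (w l - p l) := Finset.card_nsmul_le_sum _ _ _ hlb
      have e1 : ∑ l ∈ C' ∩ A, (w l - p l) + ∑ l ∈ C' \ A, (w l - p l)
          = ∑ l ∈ C', (w l - p l) := Finset.sum_inter_add_sum_sdiff _ _ _
      have e2 : ∑ l ∈ A ∩ C', (w l - p l) + ∑ l ∈ A \ C', (w l - p l)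
          = ∑ l ∈ A, (w l - p l) := Finset.sum_inter_add_sum_sdiff _ _ _
      have e3 : ∑ l ∈ C' ∩ A, (w l - p l) = ∑ l ∈ A ∩ C', (w l - p l) := by
        rw [Finset.inter_comm]
      linarith
  -- dropping nonpositive terms from C
  have hCC' : ∑ l ∈ C, (w l - p l) ≤ ∑ l ∈ C', (w l - p l) := by
    have := Finset.sum_filter_add_sum_filter_not C (fun l => 0 < w l - p l)
      (fun l => w l - p l)
    have hnp : ∑ l ∈ C.filter (fun l => ¬ 0 < w l - p l), (w l - p l) ≤ 0 :=
      Finset.sum_nonpos fun i hi => le_of_not_gt (Finset.mem_filter.1 hi).2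
    linarith
  -- prices: ∑_C p ≤ ∑_B p
  have hpCB : ∑ l ∈ C, p l ≤ ∑ l ∈ B, p l :=
    Finset.sum_le_sum_of_subset_of_nonneg hCB (fun i _ _ => le_of_lt (hG.hp i))
  have hsplitC : ∑ l ∈ C, (w l - p l) = ∑ l ∈ C, w l - ∑ l ∈ C, p l :=
    Finset.sum_sub_distrib _ _
  have hsplitA : ∑ l ∈ A, (w l - p l) = ∑ l ∈ A, w l - ∑ l ∈ A, p l :=
    Finset.sum_sub_distrib _ _
  linarith
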